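/- There exist a finite vertex set V, a degree sequence d : V → ℕ, a bipartition of V into disjoint parts U and W, a natural number k, and two realizations G and G' of d with ε(G) = ε(G') = k, such that there is no finite sequence of graphs G = G_0, G_1, …, G_t = G' in which each G_{i+1} is obtained from G_i by a swap and every G_i is a realization of d with ε(G_i) = k. -/

import Mathlib

open SimpleGraph

variable {V : Type*}

/-- Degree of `v` in `G`, via `Set.ncard`. -/
noncomputable def gdeg (G : SimpleGraph V) (v : V) : ℕ := (G.neighborSet v).ncard

/-- `G` realizes the degree sequence `d`. -/
def IsRealization (G : SimpleGraph V) (d : V → ℕ) : Prop := ∀ v, gdeg G v = d v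

/-- Number of crossing edges of `G` w.r.t. the bipartition `(U, W)`. -/
noncomputable def crossCount (U W : Set V) (G : SimpleGraph V) : ℕ :=
  {e ∈ G.edgeSet | ∃ u ∈ U, ∃ w ∈ W, e = s(u, w)}.ncard

/-- Number of edges of `G` with one endpoint in `P` and the other in `Q`. -/
noncomputable def eCount (G : SimpleGraph V) (P Q : Set V) : ℕ :=
  {e ∈ G.edgeSet | ∃ p ∈ P, ∃ q ∈ Q, e = s(p, q)}.ncard

/-- `r(G, G')`, the number of edges of `G` that are not edges of `G'`. -/
noncomputable def rdist (G G' : SimpleGraph V) : ℕ := (G.edgeSet \ G'.edgeSet).ncard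

/-- `G'` is obtained from `G` by a swap all of whose four vertices lie in `A`. -/
def IsSwapWithin (A : Set V) (G G' : SimpleGraph V) : Prop :=
  ∃ a b c d : V, a ∈ A ∧ b ∈ A ∧ c ∈ A ∧ d ∈ A ∧
    a ≠ b ∧ a ≠ c ∧ a ≠ d ∧ b ≠ c ∧ b ≠ d ∧ c ≠ d ∧
    G.Adj a b ∧ G.Adj c d ∧ ¬ G.Adj b c ∧ ¬ G.Adj a d ∧
    G'.edgeSet = (G.edgeSet \ {s(a, b), s(c, d)}) ∪ {s(b, c), s(a, d)}

/-- `G'` is obtained from `G` by a swap. -/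
def IsSwap (G G' : SimpleGraph V) : Prop := IsSwapWithin Set.univ G G'

/-- `G'` is obtained from `G` by a double swap (two simultaneous disjoint swaps). -/
def IsDoubleSwap (G G' : SimpleGraph V) : Prop :=
  ∃ a b c d e f g h : V,
    List.Pairwise (· ≠ ·) [a, b, c, d, e, f, g, h] ∧
    G.Adj a b ∧ G.Adj c d ∧ G.Adj e f ∧ G.Adj g h ∧
    ¬ G.Adj b c ∧ ¬ G.Adj a d ∧ ¬ G.Adj f g ∧ ¬ G.Adj e h ∧
    G'.edgeSet = (G.edgeSet \ {s(a, b), s(c, d), s(e, f), s(g, h)}) ∪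
      {s(b, c), s(a, d), s(f, g), s(e, h)}

/-- The `i`-th edge of the closed walk whose vertices are listed (cyclically) by `c`. -/
def stepEdge (c : List V) (i : Fin c.length) : Sym2 V :=
  s(c.get i, c.get ⟨(i.val + 1) % c.length, Nat.mod_lt _ i.pos⟩)

/-- The set of edges of the closed walk listed by `c`. -/
def circuitEdges (c : List V) : Set (Sym2 V) := Set.range (stepEdge c)

/-- The vertex list `c` describes an alternating circuit of the pair `(G, G')`:
a closed walk of even positive length, with pairwise distinct edges, whose edges lie
alternately in `E(G) \ E(G')` and `E(G') \ E(G)`, visiting no vertex more than twice. -/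
def IsAltCircuit (G G' : SimpleGraph V) (c : List V) : Prop :=
  0 < c.length ∧ Even c.length ∧
  (∀ i j : Fin c.length, stepEdge c i = stepEdge c j → i = j) ∧
  (∀ i : Fin c.length, i.val % 2 = 0 → stepEdge c i ∈ G.edgeSet \ G'.edgeSet) ∧
  (∀ i : Fin c.length, i.val % 2 = 1 → stepEdge c i ∈ G'.edgeSet \ G.edgeSet) ∧
  (∀ v : V, {i : Fin c.length | c.get i = v}.ncard ≤ 2)

/-- A decomposition of `E(G) △ E(G')` into (edge sets of) alternating circuits. -/
def IsAltCircuitDecomp (G G' : SimpleGraph V) (𝒞 : Finset (List V)) : Prop :=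
  (∀ c ∈ 𝒞, IsAltCircuit G G' c) ∧
  (∀ c ∈ 𝒞, ∀ c' ∈ 𝒞, c ≠ c' → Disjoint (circuitEdges c) (circuitEdges c')) ∧
  (⋃ c ∈ 𝒞, circuitEdges c) = symmDiff G.edgeSet G'.edgeSet

/-- Number of edges of `G` whose endpoints have classes `P` and `Q` under `π`. -/
noncomputable def wcount {C : Type*} (π : V → C) (G : SimpleGraph V) (P Q : C) : ℕ :=
  {e ∈ G.edgeSet | ∃ x y : V, e = s(x, y) ∧ π x = P ∧ π y = Q}.ncard

/-- Sum of the degree sequence over a class. -/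
noncomputable def Dsum (d : V → ℕ) (U : Set V) : ℕ := ∑ᶠ v ∈ U, d v

/-- `G` is weakly consistent with the cycle skeleton on the classes `U 0, …, U (n-1)`. -/
def WeaklyCycleConsistent (n : ℕ) [NeZero n] (U : Fin n → Set V) (G : SimpleGraph V) : Prop :=
  ∀ e ∈ G.edgeSet, ∃ (i : Fin n) (x y : V), e = s(x, y) ∧ x ∈ U i ∧ y ∈ U (i + 1)

/-- `G` is weakly consistent with the skeleton graph `S` on the classes `U`. -/
def WeaklyConsistent {C : Type*} (U : C → Set V) (S : SimpleGraph C) (G : SimpleGraph V) : Prop :=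
  ∀ e ∈ G.edgeSet, ∃ (P Q : C) (x y : V), S.Adj P Q ∧ e = s(x, y) ∧ x ∈ U P ∧ y ∈ U Q

/-- `G'` is obtained from `G` by an `F`-swap all of whose vertices lie in `A`:
the edges and non-chord-restricted non-edges are exchanged along an alternating
circuit of chords `c` in which every parity-crossing non-circuit pair is forbidden. -/
def IsFSwapWithin (A : Set V) (F : Set (Sym2 V)) (G G' : SimpleGraph V) : Prop :=
  ∃ c : List V, (∀ v ∈ c, v ∈ A) ∧ 0 < c.length ∧ Even c.length ∧
    (∀ i j : Fin c.length, stepEdge c i = stepEdge c j → i = j) ∧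
    (∀ i : Fin c.length, i.val % 2 = 0 → stepEdge c i ∈ G.edgeSet) ∧
    (∀ i : Fin c.length, i.val % 2 = 1 → stepEdge c i ∉ G.edgeSet ∧ stepEdge c i ∉ F) ∧
    (∀ i j : Fin c.length, i.val % 2 ≠ j.val % 2 → c.get i ≠ c.get j →
      s(c.get i, c.get j) ∉ circuitEdges c → s(c.get i, c.get j) ∈ F) ∧
    G'.edgeSet = (G.edgeSet \ {e | ∃ i : Fin c.length, i.val % 2 = 0 ∧ e = stepEdge c i}) ∪
      {e | ∃ i : Fin c.length, i.val % 2 = 1 ∧ e = stepEdge c i}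
section Counterexample

/-- Adjacency (as `Bool`) of the first graph in the counterexample. -/
def adjG : Fin 8 → Fin 8 → Bool := fun i j =>
  decide ((min i.val j.val, max i.val j.val) ∈
    [(0,1),(0,2),(0,3),(0,4),(0,5),(0,7),(1,2),(1,3),(1,4),(1,5),(1,6),(2,3),(4,5)])

/-- Adjacency (as `Bool`) of the second graph in the counterexample. -/
def adjG' : Fin 8 → Fin 8 → Bool := fun i j =>
  decide ((min i.val j.val, max i.val j.val) ∈
    [(0,1),(0,2),(0,3),(0,4),(0,5),(0,6),(1,2),(1,3),(1,4),(1,5),(1,7),(2,4),(3,5)])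

def Gex : SimpleGraph (Fin 8) where
  Adj i j := adjG i j = true
  symm := by constructor; intro i j h; revert h; revert j; revert i; decide
  loopless := by constructor; intro i; show ¬ (adjG i i = true); revert i; decide

def Gex' : SimpleGraph (Fin 8) where
  Adj i j := adjG' i j = true
  symm := by constructor; intro i j h; revert h; revert j; revert i; decide
  loopless := by constructor; intro i; show ¬ (adjG' i i = true); revert i; decide

instance : DecidableRel Gex.Adj := fun i j => inferInstanceAs (Decidable (adjG i j = true))
instance : DecidableRel Gex'.Adj := fun i j => inferInstanceAs (Decidable (adjG' i j = true))

def Uex : Set (Fin 8) := {v | v = 0 ∨ v = 2 ∨ v = 3 ∨ v = 6}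
def Wex : Set (Fin 8) := {v | ¬ (v = 0 ∨ v = 2 ∨ v = 3 ∨ v = 6)}

instance : DecidablePred (· ∈ Uex) := fun v =>
  inferInstanceAs (Decidable (v = 0 ∨ v = 2 ∨ v = 3 ∨ v = 6))
instance : DecidablePred (· ∈ Wex) := fun v =>
  inferInstanceAs (Decidable (¬ (v = 0 ∨ v = 2 ∨ v = 3 ∨ v = 6)))

def crossB : Sym2 (Fin 8) → Prop := fun e => ∃ u ∈ Uex, ∃ w ∈ Wex, e = s(u, w)

instance : DecidablePred crossB := fun e => by
  unfold crossB; infer_instance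

def dex : Fin 8 → ℕ := fun v => ([6,6,3,3,3,3,1,1] : List ℕ).getD v.val 0

lemma gdeg_eq_degree {V : Type*} [Fintype V] [DecidableEq V] (G : SimpleGraph V)
    [DecidableRel G.Adj] (v : V) : gdeg G v = G.degree v := by
  rw [gdeg, SimpleGraph.degree, ← Set.ncard_coe_finset]
  congr 1
  ext w
  simp

lemma crossCount_eq_of_edgeSet {H : SimpleGraph (Fin 8)} {F : Finset (Sym2 (Fin 8))}
    (h : H.edgeSet = ↑F) : crossCount Uex Wex H = (F.filter crossB).card := by
  rw [crossCount, h, ← Set.ncard_coe_finset]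
  congr 1
  ext e
  simp [crossB]

set_option maxRecDepth 1000000 in
lemma key_no_swap : ∀ a b c d : Fin 8, Gex.Adj a b → Gex.Adj c d →
    ¬ Gex.Adj b c → ¬ Gex.Adj a d →
    a ≠ b → a ≠ c → a ≠ d → b ≠ c → b ≠ d → c ≠ d →
    (((Gex.edgeFinset \ {s(a,b), s(c,d)}) ∪ {s(b,c), s(a,d)}).filter crossB).card ≠ 7 := by
  decide

end Counterexample

/-- There are two realizations of the same degree sequence with the same number `k` of
crossing edges that cannot be connected by a sequence of swaps all of whose intermediate
graphs are realizations with exactly `k` crossing edges. -/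
theorem swap_connectivity_counterexample :
    ∃ (V : Type) (_ : Fintype V) (d : V → ℕ) (U W : Set V) (k : ℕ)
      (G G' : SimpleGraph V),
      Disjoint U W ∧ U ∪ W = Set.univ ∧
      IsRealization G d ∧ IsRealization G' d ∧
      crossCount U W G = k ∧ crossCount U W G' = k ∧
      ¬ ∃ (t : ℕ) (f : ℕ → SimpleGraph V), f 0 = G ∧ f t = G' ∧
          (∀ i < t, IsSwap (f i) (f (i + 1))) ∧
          (∀ i ≤ t, IsRealization (f i) d ∧ crossCount U W (f i) = k) := by
  classical
  refine ⟨Fin 8, inferInstance, dex, Uex, Wex, 7, Gex, Gex', ?_, ?_, ?_, ?_, ?_, ?_, ?_⟩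
  · -- Disjoint
    rw [Set.disjoint_left]
    intro v hv hv'
    exact hv' hv
  · -- union
    ext v
    simp only [Set.mem_union, Set.mem_univ, iff_true]
    exact (em _).imp id id
  · -- realization G
    intro v
    rw [gdeg_eq_degree]
    revert v
    decide
  · -- realization G'
    intro v
    rw [gdeg_eq_degree]
    revert v
    decide
  · -- crossCount G
    rw [crossCount_eq_of_edgeSet (SimpleGraph.coe_edgeFinset Gex).symm]
    decide
  · -- crossCount G'
    rw [crossCount_eq_of_edgeSet (SimpleGraph.coe_edgeFinset Gex').symm]
    decide
  · rintro ⟨t, f, h0, ht, hswap, hcond⟩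
    match t, ht, hswap, hcond with
    | 0, ht, _, _ =>
      -- then Gex = Gex', contradiction
      have hGG : Gex = Gex' := h0 ▸ ht
      have h1 : Gex.Adj 2 3 := by decide
      have h2 : ¬ Gex'.Adj 2 3 := by decide
      exact h2 (hGG ▸ h1)
    | (t + 1), ht, hswap, hcond =>
      have hs : IsSwap (f 0) (f 1) := hswap 0 (Nat.succ_pos t)
      rw [h0] at hs
      obtain ⟨a, b, c, d, -, -, -, -, hab, hac, had, hbc, hbd, hcd,
        Gab, Gcd, nGbc, nGad, hE⟩ := hs
      have hk : crossCount Uex Wex (f 1) = 7 := (hcond 1 (Nat.le_add_left 1 t)).2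
      have hF : (f 1).edgeSet =
          ↑((Gex.edgeFinset \ {s(a,b), s(c,d)}) ∪ ({s(b,c), s(a,d)} : Finset (Sym2 (Fin 8)))) := by
        rw [hE]
        simp only [Finset.coe_union, Finset.coe_sdiff, Finset.coe_insert,
          Finset.coe_singleton, SimpleGraph.coe_edgeFinset]
      rw [crossCount_eq_of_edgeSet hF] at hk
      exact key_no_swap a b c d Gab Gcd nGbc nGad hab hac had hbc hbd hcd hk
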